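/- Let 𝒩 be a connected plane Euclidean network. Then the locus 𝒩_ℓ admits a shortcut set if and only if diam(CH(𝒩_ℓ)) < diam(𝒩_ℓ). -/

import Mathlib

open Set
open scoped ENNReal

noncomputable section

attribute [local instance] Classical.propDecidable
set_option maxHeartbeats 1000000

/-- Points of the Euclidean plane. -/
abbrev Pt : Type := EuclideanSpace ℝ (Fin 2)

/-- Intrinsic (geodesic) distance inside a set `X ⊆ ℝ²`: the infimum of the lengths
(total variations) of continuous paths from `p` to `q` whose image lies in `X`. -/
def idist (X : Set Pt) (p q : Pt) : ℝ≥0∞ :=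
  ⨅ (γ : ℝ → Pt) (_ : ContinuousOn γ (Set.Icc 0 1)) (_ : γ '' Set.Icc 0 1 ⊆ X)
    (_ : γ 0 = p) (_ : γ 1 = q), eVariationOn γ (Set.Icc 0 1)

/-- Eccentricity of a point within `X`. -/
def ecc (X : Set Pt) (p : Pt) : ℝ≥0∞ := ⨆ q ∈ X, idist X p q

/-- Intrinsic diameter of `X`. -/
def idiam (X : Set Pt) : ℝ≥0∞ := ⨆ p ∈ X, ecc X p

/-- A plane Euclidean network: a finite set of vertices in the plane together with a
finite set of straight-line edges (recorded as ordered pairs of distinct vertices, each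
edge recorded exactly once), such that two distinct edges meet only in common endpoints. -/
structure PlaneNetwork where
  V : Finset Pt
  Edg : Finset (Pt × Pt)
  ends_mem : ∀ e ∈ Edg, e.1 ∈ V ∧ e.2 ∈ V
  ends_ne : ∀ e ∈ Edg, e.1 ≠ e.2
  no_swap : ∀ e ∈ Edg, (e.2, e.1) ∉ Edg
  vertex_cover : ∀ v ∈ V, ∃ e ∈ Edg, v = e.1 ∨ v = e.2
  plane : ∀ e ∈ Edg, ∀ f ∈ Edg, e ≠ f →
    segment ℝ e.1 e.2 ∩ segment ℝ f.1 f.2 ⊆ ({e.1, e.2} ∩ {f.1, f.2} : Set Pt)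

namespace PlaneNetwork

/-- The locus of a network: the union of all its (closed) edges. -/
def locus (N : PlaneNetwork) : Set Pt := ⋃ e ∈ N.Edg, segment ℝ e.1 e.2

/-- A network is connected when its locus is path-connected. -/
def Connected (N : PlaneNetwork) : Prop := IsPathConnected N.locus

/-- `u` and `v` are joined by an edge of the network. -/
def IsEdge (N : PlaneNetwork) (u v : Pt) : Prop := (u, v) ∈ N.Edg ∨ (v, u) ∈ N.Edg

/-- A vertex is pendant if it is an endpoint of exactly one edge. -/
def IsPendantVertex (N : PlaneNetwork) (v : Pt) : Prop :=
  v ∈ N.V ∧ (N.Edg.filter (fun e => e.1 = v ∨ e.2 = v)).card = 1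

/-- The number of pendant vertices of a network. -/
def pendantCount (N : PlaneNetwork) : ℕ := (N.V.filter fun v => N.IsPendantVertex v).card

end PlaneNetwork

/-- The union of a set with all the segments in a list. -/
def insertSegs (X : Set Pt) (L : List (Pt × Pt)) : Set Pt :=
  X ∪ ⋃ s ∈ L, segment ℝ s.1 s.2

/-- The segments of the list are inserted iteratively: the endpoints of the first one lie
on `X`, and the endpoints of each subsequent segment lie on the union of `X` with the
previously inserted segments. -/
def ValidSegs (X : Set Pt) : List (Pt × Pt) → Prop
  | [] => True
  | s :: rest => s.1 ∈ X ∧ s.2 ∈ X ∧ ValidSegs (X ∪ segment ℝ s.1 s.2) rest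

/-- A shortcut set for `X`: a finite sequence of iteratively inserted segments whose
insertion strictly decreases the intrinsic diameter. -/
def IsShortcutSet (X : Set Pt) (L : List (Pt × Pt)) : Prop :=
  ValidSegs X L ∧ idiam (insertSegs X L) < idiam X

/-- `X` admits a shortcut set. -/
def HasShortcutSet (X : Set Pt) : Prop := ∃ L, IsShortcutSet X L

/-- The shortcut number: the minimum size of a shortcut set. -/
def scn (X : Set Pt) : ℕ :=
  sInf {k | ∃ L : List (Pt × Pt), L.length = k ∧ IsShortcutSet X L}

lemma idist_le {X : Set Pt} {p q : Pt} {γ : ℝ → Pt} (hc : ContinuousOn γ (Set.Icc 0 1))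
    (him : γ '' Set.Icc 0 1 ⊆ X) (h0 : γ 0 = p) (h1 : γ 1 = q) :
    idist X p q ≤ eVariationOn γ (Set.Icc 0 1) :=
  iInf_le_of_le γ (iInf_le_of_le hc (iInf_le_of_le him (iInf_le_of_le h0 (iInf_le _ h1))))

lemma edist_le_idist {X : Set Pt} {p q : Pt} : edist p q ≤ idist X p q := by
  refine le_iInf fun γ => le_iInf fun hc => le_iInf fun him => le_iInf fun h0 => le_iInf fun h1 => ?_
  rw [← h0, ← h1]
  exact eVariationOn.edist_le γ (by constructor <;> norm_num : (0:ℝ) ∈ Set.Icc (0:ℝ) 1)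
    (by constructor <;> norm_num : (1:ℝ) ∈ Set.Icc (0:ℝ) 1)

lemma idist_self {X : Set Pt} {p : Pt} (hp : p ∈ X) : idist X p p = 0 := by
  refine le_antisymm ?_ (zero_le)
  have h := idist_le (X := X) (γ := fun _ => p) continuousOn_const
    (by rintro x ⟨t, _, rfl⟩; exact hp) rfl rfl
  refine h.trans ?_
  refine le_of_eq (eVariationOn.constant_on ?_)
  intro x hx y hy
  rcases hx with ⟨t, _, rfl⟩; rcases hy with ⟨u, _, rfl⟩; rfl

lemma idist_anti {X Y : Set Pt} (h : X ⊆ Y) (p q : Pt) : idist Y p q ≤ idist X p q := by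
  refine le_iInf fun γ => le_iInf fun hc => le_iInf fun him => le_iInf fun h0 => le_iInf fun h1 => ?_
  exact idist_le hc (him.trans h) h0 h1

lemma idist_le_edist_of_segment {X : Set Pt} {p q : Pt} (h : segment ℝ p q ⊆ X) :
    idist X p q ≤ edist p q := by
  set γ : ℝ → Pt := fun t => AffineMap.lineMap p q t with hγ
  have hcont : ContinuousOn γ (Set.Icc 0 1) := (AffineMap.lineMap_continuous).continuousOn
  have him : γ '' Set.Icc 0 1 ⊆ X := by
    rw [show γ '' Set.Icc 0 1 = segment ℝ p q from (segment_eq_image_lineMap ℝ p q).symm]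
    exact h
  have hl : LipschitzWith (nndist p q) (fun t : ℝ => AffineMap.lineMap p q t) := by
    refine LipschitzWith.of_dist_le_mul fun x y => ?_
    rw [dist_lineMap_lineMap]
    rw [Real.dist_eq, mul_comm, dist_nndist]
  have hvar : eVariationOn γ (Set.Icc 0 1) ≤ (nndist p q : ℝ≥0∞) * 1 := by
    have h2 : eVariationOn (id : ℝ → ℝ) (Set.Icc 0 1) ≤ ENNReal.ofReal ((1:ℝ) - 0) := by
      have := MonotoneOn.eVariationOn_le (f := (id : ℝ → ℝ)) (s := Set.Icc 0 1)
        (monotoneOn_id) (a := 0) (b := 1)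
        (by constructor <;> norm_num) (by constructor <;> norm_num)
      simpa using this
    have h3 := (hl.lipschitzOnWith (s := Set.univ)).comp_eVariationOn_le
      (g := (id : ℝ → ℝ)) (s := Set.Icc 0 1) (mapsTo_univ _ _)
    have : eVariationOn γ (Set.Icc 0 1) ≤ (nndist p q : ℝ≥0∞) * eVariationOn (id : ℝ → ℝ) (Set.Icc 0 1) := by
      simpa [Function.comp] using h3
    refine this.trans ?_
    exact mul_le_mul_right (by simpa using h2) _
  have := (idist_le (p := p) (q := q) hcont him (show γ 0 = p by simp [hγ]) (show γ 1 = q by simp [hγ])).trans hvar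
  rw [mul_one, ← edist_nndist] at this
  exact this

lemma continuousOn_paste {f : ℝ → Pt} {a b c : ℝ} (hab : a ≤ b) (hbc : b ≤ c)
    (h1 : ContinuousOn f (Set.Icc a b)) (h2 : ContinuousOn f (Set.Icc b c)) :
    ContinuousOn f (Set.Icc a c) := by
  rw [← Set.Icc_union_Icc_eq_Icc hab hbc]
  intro x hx
  apply ContinuousWithinAt.union
  · by_cases h : x ∈ Set.Icc a b
    · exact h1 x h
    · exact continuousWithinAt_of_notMem_closure (by rwa [isClosed_Icc.closure_eq])
  · by_cases h : x ∈ Set.Icc b c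
    · exact h2 x h
    · exact continuousWithinAt_of_notMem_closure (by rwa [isClosed_Icc.closure_eq])

lemma idist_triangle (X : Set Pt) (p q r : Pt) :
    idist X p r ≤ idist X p q + idist X q r := by
  conv_rhs => rw [idist, idist]
  simp only [ENNReal.iInf_add, ENNReal.add_iInf]
  refine le_iInf fun γ₁ => le_iInf fun hc₁ => le_iInf fun him₁ => le_iInf fun h0₁ =>
    le_iInf fun h1₁ => le_iInf fun γ₂ => le_iInf fun hc₂ => le_iInf fun him₂ =>
    le_iInf fun h0₂ => le_iInf fun h1₂ => ?_
  classical
  set γ : ℝ → Pt := fun t => if t ≤ 1/2 then γ₂ (2*t + 0) else γ₁ (2*t + -1) with hγdef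
  have heq1 : EqOn γ (γ₂ ∘ (fun t : ℝ => 2*t + 0)) (Set.Icc 0 (1/2:ℝ)) := by
    intro t ht
    simp only [hγdef, Function.comp]
    rw [if_pos ht.2]
  have heq2 : EqOn γ (γ₁ ∘ (fun t : ℝ => 2*t + -1)) (Set.Icc (1/2:ℝ) 1) := by
    intro t ht
    simp only [hγdef, Function.comp]
    by_cases h : t ≤ 1/2
    · have ht2 : t = 1/2 := le_antisymm h ht.1
      rw [if_pos h, ht2]
      norm_num [h1₂, h0₁]
    · rw [if_neg h]
  have hmono1 : MonotoneOn (fun t : ℝ => 2*t + 0) (Set.Icc 0 (1/2:ℝ)) := by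
    intro a _ b _ hab; simp only; linarith
  have hmono2 : MonotoneOn (fun t : ℝ => 2*t + -1) (Set.Icc (1/2:ℝ) 1) := by
    intro a _ b _ hab; simp only; linarith
  have himg1 : (fun t : ℝ => 2*t + 0) '' Set.Icc 0 (1/2:ℝ) = Set.Icc (0:ℝ) 1 := by
    rw [image_affine_Icc' (by norm_num : (0:ℝ) < 2)]
    norm_num
  have himg2 : (fun t : ℝ => 2*t + -1) '' Set.Icc (1/2:ℝ) 1 = Set.Icc (0:ℝ) 1 := by
    rw [image_affine_Icc' (by norm_num : (0:ℝ) < 2)]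
    norm_num
  have hcont : ContinuousOn γ (Set.Icc 0 1) := by
    apply continuousOn_paste (by norm_num : (0:ℝ) ≤ 1/2) (by norm_num : (1/2:ℝ) ≤ 1)
    · refine ContinuousOn.congr ?_ heq1
      refine hc₂.comp ((continuous_const.mul continuous_id).add continuous_const).continuousOn ?_
      rw [← himg1]; exact (Set.Icc 0 (1/2:ℝ)).mapsTo_image _
    · refine ContinuousOn.congr ?_ heq2
      refine hc₁.comp ((continuous_const.mul continuous_id).add continuous_const).continuousOn ?_
      rw [← himg2]; exact (Set.Icc (1/2:ℝ) 1).mapsTo_image _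
  have him : γ '' Set.Icc 0 1 ⊆ X := by
    rintro x ⟨t, ht, rfl⟩
    by_cases h : t ≤ 1/2
    · rw [hγdef]; simp only [if_pos h]
      exact him₂ ⟨2*t + 0, by constructor <;> [linarith [ht.1]; linarith], rfl⟩
    · rw [hγdef]; simp only [if_neg h]
      exact him₁ ⟨2*t + -1, by constructor <;> [linarith; linarith [ht.2]], rfl⟩
  have h0 : γ 0 = p := by rw [hγdef]; norm_num [h0₂]
  have h1 : γ 1 = r := by rw [hγdef]; norm_num [h1₁]
  refine (idist_le hcont him h0 h1).trans ?_
  have hsplit : eVariationOn γ (Set.Icc 0 (1/2:ℝ)) + eVariationOn γ (Set.Icc (1/2:ℝ) 1)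
      = eVariationOn γ (Set.Icc (0:ℝ) 1) := by
    have := eVariationOn.Icc_add_Icc γ (s := Set.univ)
      (by norm_num : (0:ℝ) ≤ 1/2) (by norm_num : (1/2:ℝ) ≤ 1) (Set.mem_univ _)
    simpa [Set.univ_inter] using this
  rw [← hsplit]
  refine add_le_add (le_of_eq ?_) (le_of_eq ?_)
  · rw [eVariationOn.eq_of_eqOn heq1, eVariationOn.comp_eq_of_monotoneOn γ₂ _ hmono1, himg1]
  · rw [eVariationOn.eq_of_eqOn heq2, eVariationOn.comp_eq_of_monotoneOn γ₁ _ hmono2, himg2]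

lemma idist_le_idiam {X : Set Pt} {p q : Pt} (hp : p ∈ X) (hq : q ∈ X) :
    idist X p q ≤ idiam X := by
  refine le_trans ?_ (le_iSup₂ (f := fun p (_ : p ∈ X) => ecc X p) p hp)
  exact le_iSup₂ (f := fun q (_ : q ∈ X) => idist X p q) q hq

lemma idiam_le {X : Set Pt} {C : ℝ≥0∞} (h : ∀ p ∈ X, ∀ q ∈ X, idist X p q ≤ C) :
    idiam X ≤ C :=
  iSup₂_le fun p hp => iSup₂_le fun q hq => h p hp q hq

lemma subset_insertSegs (X : Set Pt) (L : List (Pt × Pt)) : X ⊆ insertSegs X L :=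
  Set.subset_union_left

lemma insertSegs_nil (X : Set Pt) : insertSegs X [] = X := by
  simp [insertSegs]

lemma insertSegs_cons (X : Set Pt) (s : Pt × Pt) (L : List (Pt × Pt)) :
    insertSegs X (s :: L) = insertSegs (X ∪ segment ℝ s.1 s.2) L := by
  ext x
  simp only [insertSegs, List.mem_cons, Set.mem_union, Set.mem_iUnion]
  constructor
  · rintro (h | ⟨t, (rfl | ht), hx⟩)
    · exact Or.inl (Or.inl h)
    · exact Or.inl (Or.inr hx)
    · exact Or.inr ⟨t, ht, hx⟩
  · rintro ((h | h) | ⟨t, ht, hx⟩)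
    · exact Or.inl h
    · exact Or.inr ⟨s, Or.inl rfl, h⟩
    · exact Or.inr ⟨t, Or.inr ht, hx⟩

lemma insertSegs_append (X : Set Pt) (L₁ L₂ : List (Pt × Pt)) :
    insertSegs X (L₁ ++ L₂) = insertSegs (insertSegs X L₁) L₂ := by
  induction L₁ generalizing X with
  | nil => simp [insertSegs_nil]
  | cons s L ih => rw [List.cons_append, insertSegs_cons, insertSegs_cons, ih]

lemma seg_subset_insertSegs {X : Set Pt} {L : List (Pt × Pt)} {s : Pt × Pt} (hs : s ∈ L) :
    segment ℝ s.1 s.2 ⊆ insertSegs X L := fun x hx =>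
  Set.mem_union_right _ (Set.mem_biUnion hs hx)

lemma insertSegs_subset {X C : Set Pt} {L : List (Pt × Pt)} (hX : X ⊆ C)
    (hL : ∀ s ∈ L, segment ℝ s.1 s.2 ⊆ C) : insertSegs X L ⊆ C := by
  refine Set.union_subset hX ?_
  exact Set.iUnion₂_subset fun s hs => hL s hs

lemma validSegs_mono {X Y : Set Pt} {L : List (Pt × Pt)} (hXY : X ⊆ Y)
    (h : ValidSegs X L) : ValidSegs Y L := by
  induction L generalizing X Y with
  | nil => trivial
  | cons s L ih =>
    obtain ⟨h1, h2, h3⟩ := h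
    exact ⟨hXY h1, hXY h2, ih (Set.union_subset_union_left _ hXY) h3⟩

lemma validSegs_append {X : Set Pt} {L₁ L₂ : List (Pt × Pt)} (h₁ : ValidSegs X L₁)
    (h₂ : ValidSegs (insertSegs X L₁) L₂) : ValidSegs X (L₁ ++ L₂) := by
  induction L₁ generalizing X with
  | nil => simpa [insertSegs_nil] using h₂
  | cons s L ih =>
    obtain ⟨ha, hb, hc⟩ := h₁
    rw [insertSegs_cons] at h₂
    exact ⟨ha, hb, ih hc h₂⟩

lemma validSegs_of_mem {X : Set Pt} {L : List (Pt × Pt)}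
    (h : ∀ s ∈ L, s.1 ∈ X ∧ s.2 ∈ X) : ValidSegs X L := by
  induction L generalizing X with
  | nil => trivial
  | cons s L ih =>
    refine ⟨(h s List.mem_cons_self).1, (h s List.mem_cons_self).2, ?_⟩
    exact ih fun t ht => ⟨Set.mem_union_left _ (h t (List.mem_cons_of_mem s ht)).1,
      Set.mem_union_left _ (h t (List.mem_cons_of_mem s ht)).2⟩

lemma idist_le_sum_chain {Y : Set Pt} {g : ℕ → Pt} (h0 : g 0 ∈ Y) (n : ℕ) :
    idist Y (g 0) (g n) ≤ ∑ i ∈ Finset.range n, idist Y (g i) (g (i + 1)) := by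
  induction n with
  | zero => simp [idist_self h0]
  | succ n ih =>
    rw [Finset.sum_range_succ]
    exact (idist_triangle Y (g 0) (g n) (g (n + 1))).trans (add_le_add_left ih _)

lemma insertSegs_append_left (X : Set Pt) (L₁ L₂ : List (Pt × Pt)) :
    insertSegs X L₁ ⊆ insertSegs X (L₁ ++ L₂) :=
  insertSegs_subset (subset_insertSegs _ _)
    (fun s hs => seg_subset_insertSegs (List.mem_append.2 (Or.inl hs)))

lemma insertSegs_append_right (X : Set Pt) (L₁ L₂ : List (Pt × Pt)) :
    insertSegs X L₂ ⊆ insertSegs X (L₁ ++ L₂) :=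
  insertSegs_subset (subset_insertSegs _ _)
    (fun s hs => seg_subset_insertSegs (List.mem_append.2 (Or.inr hs)))

lemma good_append {X C : Set Pt} {L₁ L₂ : List (Pt × Pt)} (hXC : X ⊆ C)
    (h₁ : ValidSegs X L₁) (c₁ : insertSegs X L₁ ⊆ C)
    (h₂ : ValidSegs X L₂) (c₂ : insertSegs X L₂ ⊆ C) :
    ValidSegs X (L₁ ++ L₂) ∧ insertSegs X (L₁ ++ L₂) ⊆ C := by
  constructor
  · exact validSegs_append h₁ (validSegs_mono (subset_insertSegs _ _) h₂)
  · refine insertSegs_subset hXC fun s hs => ?_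
    rcases List.mem_append.1 hs with h | h
    · exact (seg_subset_insertSegs h).trans c₁
    · exact (seg_subset_insertSegs (X := X) h).trans c₂

def Reach (X : Set Pt) : Set Pt :=
  {p | ∃ L, ValidSegs X L ∧ p ∈ insertSegs X L ∧ insertSegs X L ⊆ convexHull ℝ X}

lemma subset_reach (X : Set Pt) : X ⊆ Reach X := fun p hp =>
  ⟨[], trivial, by simpa [insertSegs_nil] using hp,
    by simpa [insertSegs_nil] using subset_convexHull ℝ X⟩

lemma convex_reach (X : Set Pt) : Convex ℝ (Reach X) := by
  intro p hp q hq a b ha hb hab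
  obtain ⟨L₁, hv₁, hp₁, hs₁⟩ := hp
  obtain ⟨L₂, hv₂, hp₂, hs₂⟩ := hq
  obtain ⟨hv, hs⟩ := good_append (subset_convexHull ℝ X) hv₁ hs₁ hv₂ hs₂
  refine ⟨L₁ ++ L₂ ++ [(p, q)], ?_, ?_, ?_⟩
  · refine validSegs_append hv ?_
    refine ⟨(insertSegs_append_left X L₁ L₂) hp₁, (insertSegs_append_right X L₁ L₂) hp₂, trivial⟩
  · refine seg_subset_insertSegs (s := (p, q)) (by simp) ?_
    exact ⟨a, b, ha, hb, hab, rfl⟩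
  · rw [insertSegs_append]
    refine insertSegs_subset hs fun s hs' => ?_
    have : s = (p, q) := by simpa using hs'
    subst this
    exact (convex_convexHull ℝ X).segment_subset (hs₁ hp₁) (hs₂ hp₂)

lemma hull_subset_reach (X : Set Pt) : convexHull ℝ X ⊆ Reach X :=
  convexHull_min (subset_reach X) (convex_reach X)

lemma reach_finset (X : Set Pt) (Q : Finset Pt) (hQ : ↑Q ⊆ convexHull ℝ X) :
    ∃ L, ValidSegs X L ∧ ↑Q ⊆ insertSegs X L ∧ insertSegs X L ⊆ convexHull ℝ X := by
  classical
  induction Q using Finset.induction with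
  | empty => exact ⟨[], trivial, by simp, by simpa [insertSegs_nil] using subset_convexHull ℝ X⟩
  | @insert a Q ha ih =>
    obtain ⟨L, hv, hmem, hsub⟩ := ih (by
      refine subset_trans ?_ hQ
      exact_mod_cast Finset.subset_insert a Q)
    obtain ⟨La, hva, hpa, hsa⟩ := hull_subset_reach X (hQ (Finset.mem_coe.2 (Finset.mem_insert_self a Q)))
    obtain ⟨hv', hs'⟩ := good_append (subset_convexHull ℝ X) hv hsub hva hsa
    refine ⟨L ++ La, hv', ?_, hs'⟩
    intro x hx
    rcases Finset.mem_insert.1 (by exact_mod_cast hx) with rfl | hx'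
    · exact insertSegs_append_right X L La hpa
    · exact insertSegs_append_left X L La (hmem (by exact_mod_cast hx'))

lemma dist_right_of_segment {z w p : Pt} (h : p ∈ segment ℝ z w) : dist p w ≤ dist z w := by
  obtain ⟨a, b, ha, hb, hab, rfl⟩ := h
  have : a • z + b • w - w = a • (z - w) := by
    have hb' : b = 1 - a := by linarith
    rw [hb']
    module
  rw [dist_eq_norm, this, norm_smul, Real.norm_eq_abs, abs_of_nonneg ha, dist_eq_norm]
  nlinarith [norm_nonneg (z - w), dist_nonneg (x := z) (y := w)]

lemma idist_le_ofReal_dist {Y : Set Pt} {p q : Pt} (h : segment ℝ p q ⊆ Y) :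
    idist Y p q ≤ ENNReal.ofReal (dist p q) := by
  rw [← edist_dist]
  exact idist_le_edist_of_segment h

lemma mem_segment_lineMap {a b : Pt} {t : ℝ} (h0 : 0 ≤ t) (h1 : t ≤ 1) :
    AffineMap.lineMap a b t ∈ segment ℝ a b := by
  rw [segment_eq_image_lineMap]
  exact ⟨t, ⟨h0, h1⟩, rfl⟩

lemma idist_symm_le (X : Set Pt) (p q : Pt) : idist X p q ≤ idist X q p := by
  refine le_iInf fun γ => le_iInf fun hc => le_iInf fun him => le_iInf fun h0 => le_iInf fun h1 => ?_
  set φ : ℝ → ℝ := fun t => 1 - t with hφ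
  have himg : φ '' Set.Icc 0 1 = Set.Icc (0:ℝ) 1 := by
    rw [hφ]
    rw [show (fun t : ℝ => 1 - t) = (fun t : ℝ => 1 - t) from rfl]
    rw [Set.image_const_sub_Icc]
    norm_num
  have hanti : AntitoneOn φ (Set.Icc 0 (1:ℝ)) := by
    intro a _ b _ hab; simp only [hφ]; linarith
  have hcont : ContinuousOn (γ ∘ φ) (Set.Icc 0 1) := by
    refine hc.comp (continuous_const.sub continuous_id).continuousOn ?_
    intro t ht
    rw [← himg]
    exact Set.mem_image_of_mem φ ht
  have him' : (γ ∘ φ) '' Set.Icc 0 1 ⊆ X := by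
    rw [Set.image_comp, himg]; exact him
  have h0' : (γ ∘ φ) 0 = p := by simp only [Function.comp, hφ]; norm_num [h1]
  have h1' : (γ ∘ φ) 1 = q := by simp only [Function.comp, hφ]; norm_num [h0]
  refine (idist_le hcont him' h0' h1').trans ?_
  rw [eVariationOn.comp_eq_of_antitoneOn γ φ hanti, himg]

lemma idist_symm (X : Set Pt) (p q : Pt) : idist X p q = idist X q p :=
  le_antisymm (idist_symm_le X p q) (idist_symm_le X q p)

lemma main_construction (E₀ : List (Pt × Pt)) (X : Set Pt)
    (hX : X = ⋃ s ∈ E₀, segment ℝ s.1 s.2) (hne : X.Nonempty)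
    (δ : ℝ) (hδ : 0 < δ) :
    ∃ L, ValidSegs X L ∧
      idiam (insertSegs X L) ≤ EMetric.diam (convexHull ℝ X) + ENNReal.ofReal δ := by
  classical
  set H : Set Pt := convexHull ℝ X with hHdef
  have hXH : X ⊆ H := subset_convexHull ℝ X
  -- compactness / boundedness
  have hcomp : IsCompact X := by
    rw [hX]
    refine (List.finite_toSet E₀).isCompact_biUnion fun s _ => ?_
    rw [segment_eq_image_lineMap]
    exact isCompact_Icc.image AffineMap.lineMap_continuous
  have hXb : Bornology.IsBounded X := hcomp.isBounded
  have hHb : Bornology.IsBounded H := isBounded_convexHull.2 hXb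
  have htb : TotallyBounded H := by
    have h1 : Bornology.IsBounded (closure H) := hHb.closure
    have h2 : IsCompact (closure H) := Metric.isCompact_of_isClosed_isBounded isClosed_closure h1
    exact h2.totallyBounded.subset subset_closure
  set dR : ℝ := Metric.diam H with hdRdef
  have hdR0 : 0 ≤ dR := Metric.diam_nonneg
  -- constants
  set ε : ℝ := δ / 8 with hεdef
  have hε : 0 < ε := by positivity
  set m : ℕ := ⌈dR / ε⌉₊ + 1 with hmdef
  have hm1 : 1 ≤ m := Nat.le_add_left 1 _
  have hm0 : (0:ℝ) < m := by positivity
  have hmge : dR / ε ≤ m := by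
    refine (Nat.le_ceil _).trans ?_
    exact_mod_cast Nat.le_succ _
  have hdRm : dR / m ≤ ε := by
    rw [div_le_iff₀ hm0]
    rw [div_le_iff₀ hε] at hmge
    linarith
  set η : ℝ := δ / (16 * (m + 1)) with hηdef
  have hη : 0 < η := by positivity
  set τ : ℝ := ε + 2 * η with hτdef
  -- the net
  obtain ⟨P, hPsub, hPfin, hPcov⟩ :
      ∃ P, P ⊆ H ∧ P.Finite ∧ H ⊆ ⋃ y ∈ P, {x | dist x y < η} := by
    obtain ⟨P, hP1, hP2, hP3⟩ := totallyBounded_iff_subset.1 htb _ (Metric.dist_mem_uniformity hη)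
    exact ⟨P, hP1, hP2, hP3⟩
  have hhub : ∀ z ∈ H, ∃ y, y ∈ P ∧ dist z y < η := by
    intro z hz
    obtain ⟨y, hy, hd⟩ := Set.mem_iUnion₂.1 (hPcov hz)
    exact ⟨y, hy, hd⟩
  set hub : Pt → Pt := fun z => if h : z ∈ H then (hhub z h).choose else hne.choose with hhubdef
  have hub_mem : ∀ z ∈ H, hub z ∈ P := by
    intro z hz; rw [hhubdef]; simp only [dif_pos hz]; exact (hhub z hz).choose_spec.1
  have hub_dist : ∀ z ∈ H, dist z (hub z) < η := by
    intro z hz; rw [hhubdef]; simp only [dif_pos hz]; exact (hhub z hz).choose_spec.2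
  -- phase 1: anchor the net points
  obtain ⟨L₁, hv₁, hPin, hU₁H⟩ := reach_finset X hPfin.toFinset (by
    rw [Set.Finite.coe_toFinset]; exact hPsub)
  rw [Set.Finite.coe_toFinset] at hPin
  set U₁ : Set Pt := insertSegs X L₁ with hU₁def
  -- phase 2: hub-hub edges
  set L₂ : List (Pt × Pt) :=
    ((hPfin.toFinset ×ˢ hPfin.toFinset).filter (fun s => dist s.1 s.2 ≤ τ)).toList with hL₂def
  have hL₂mem : ∀ s ∈ L₂, s.1 ∈ P ∧ s.2 ∈ P := by
    intro s hs
    rw [hL₂def, Finset.mem_toList, Finset.mem_filter, Finset.mem_product] at hs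
    exact ⟨hPfin.mem_toFinset.1 hs.1.1, hPfin.mem_toFinset.1 hs.1.2⟩
  have hL₂mem' : ∀ x y, x ∈ P → y ∈ P → dist x y ≤ τ → (x, y) ∈ L₂ := by
    intro x y hx hy hd
    rw [hL₂def, Finset.mem_toList, Finset.mem_filter, Finset.mem_product]
    exact ⟨⟨hPfin.mem_toFinset.2 hx, hPfin.mem_toFinset.2 hy⟩, hd⟩
  have hv₂ : ValidSegs U₁ L₂ := validSegs_of_mem fun s hs =>
    ⟨hPin (hL₂mem s hs).1, hPin (hL₂mem s hs).2⟩
  set U₂ : Set Pt := insertSegs X (L₁ ++ L₂) with hU₂def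
  have hv₁₂ : ValidSegs X (L₁ ++ L₂) := validSegs_append hv₁ hv₂
  have hU₁U₂ : U₁ ⊆ U₂ := insertSegs_append_left X L₁ L₂
  have hXU₁ : X ⊆ U₁ := subset_insertSegs _ _
  set AllSegs : List (Pt × Pt) := E₀ ++ L₁ ++ L₂ with hAlldef
  have hsegX : ∀ s ∈ E₀, segment ℝ s.1 s.2 ⊆ X := by
    intro s hs
    intro x hx
    rw [hX]
    exact Set.mem_biUnion hs hx
  have hAllH : ∀ s ∈ AllSegs, segment ℝ s.1 s.2 ⊆ H := by
    intro s hs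
    rcases List.mem_append.1 hs with hs' | hs'
    · rcases List.mem_append.1 hs' with h | h
      · exact (hsegX s h).trans hXH
      · exact (seg_subset_insertSegs (X := X) h).trans hU₁H
    · refine (convex_convexHull ℝ X).segment_subset ?_ ?_
      · exact hPsub (hL₂mem s hs').1
      · exact hPsub (hL₂mem s hs').2
  have hAllU₂ : ∀ s ∈ AllSegs, segment ℝ s.1 s.2 ⊆ U₂ := by
    intro s hs
    rcases List.mem_append.1 hs with hs' | hs'
    · rcases List.mem_append.1 hs' with h | h
      · exact (hsegX s h).trans (hXU₁.trans hU₁U₂)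
      · exact (seg_subset_insertSegs (X := X) h).trans hU₁U₂
    · exact seg_subset_insertSegs (List.mem_append.2 (Or.inr hs'))
  -- tether points
  set ptOn : Pt × Pt → ℕ → Pt := fun s j => AffineMap.lineMap s.1 s.2 ((j:ℝ)/m) with hptdef
  have hpt_mem : ∀ (s : Pt × Pt) (j : ℕ), j ≤ m → ptOn s j ∈ segment ℝ s.1 s.2 := by
    intro s j hj
    refine mem_segment_lineMap (by positivity) ?_
    rw [div_le_one hm0]
    exact_mod_cast hj
  set L₃ : List (Pt × Pt) :=
    AllSegs.flatMap (fun s => (List.range (m+1)).map (fun j => (ptOn s j, hub (ptOn s j)))) with hL₃def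
  have hL₃mem : ∀ t ∈ L₃, ∃ s ∈ AllSegs, ∃ j ≤ m, t = (ptOn s j, hub (ptOn s j)) := by
    intro t ht
    rw [hL₃def, List.mem_flatMap] at ht
    obtain ⟨s, hs, ht⟩ := ht
    rw [List.mem_map] at ht
    obtain ⟨j, hj, rfl⟩ := ht
    exact ⟨s, hs, j, Nat.lt_succ_iff.1 (List.mem_range.1 hj), rfl⟩
  have hL₃mem' : ∀ s ∈ AllSegs, ∀ j, j ≤ m → (ptOn s j, hub (ptOn s j)) ∈ L₃ := by
    intro s hs j hj
    rw [hL₃def, List.mem_flatMap]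
    exact ⟨s, hs, List.mem_map.2 ⟨j, List.mem_range.2 (Nat.lt_succ_iff.2 hj), rfl⟩⟩
  have hv₃ : ValidSegs U₂ L₃ := by
    refine validSegs_of_mem ?_
    intro t ht
    obtain ⟨s, hs, j, hj, rfl⟩ := hL₃mem t ht
    refine ⟨hAllU₂ s hs (hpt_mem s j hj), ?_⟩
    exact hU₁U₂ (hPin (hub_mem _ (hAllH s hs (hpt_mem s j hj))))
  set L : List (Pt × Pt) := (L₁ ++ L₂) ++ L₃ with hLdef
  have hvL : ValidSegs X L := validSegs_append hv₁₂ hv₃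
  set Y : Set Pt := insertSegs X L with hYdef
  have hU₂Y : U₂ ⊆ Y := insertSegs_append_left X (L₁ ++ L₂) L₃
  have hXY : X ⊆ Y := subset_insertSegs _ _
  have hPY : P ⊆ Y := fun x hx => hU₂Y (hU₁U₂ (hPin hx))
  have hsegY : ∀ s ∈ AllSegs, segment ℝ s.1 s.2 ⊆ Y := fun s hs => (hAllU₂ s hs).trans hU₂Y
  have htetherY : ∀ t ∈ L₃, segment ℝ t.1 t.2 ⊆ Y := fun t ht =>
    seg_subset_insertSegs (List.mem_append.2 (Or.inr ht))
  have hhubedgeY : ∀ x y, x ∈ P → y ∈ P → dist x y ≤ τ → segment ℝ x y ⊆ Y := by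
    intro x y hx hy hd
    exact seg_subset_insertSegs (s := (x, y))
      (List.mem_append.2 (Or.inl (List.mem_append.2 (Or.inr (hL₂mem' x y hx hy hd)))))
  have hYH : Y ⊆ H := by
    refine insertSegs_subset hXH ?_
    intro s hs
    rcases List.mem_append.1 hs with hs' | hs'
    · rcases List.mem_append.1 hs' with h | h
      · exact hAllH s (List.mem_append.2 (Or.inl (List.mem_append.2 (Or.inr h))))
      · exact hAllH s (List.mem_append.2 (Or.inr h))
    · obtain ⟨s', hs'', j, hj, rfl⟩ := hL₃mem s hs'
      have hz : ptOn s' j ∈ H := hAllH s' hs'' (hpt_mem s' j hj)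
      exact (convex_convexHull ℝ X).segment_subset hz (hPsub (hub_mem _ hz))
  -- coverage: every point on a long segment is close to a net point
  have hdistdR : ∀ a b : Pt, a ∈ H → b ∈ H → dist a b ≤ dR :=
    fun a b ha hb => Metric.dist_le_diam_of_mem hHb ha hb
  have hcoverSeg : ∀ s ∈ AllSegs, ∀ p ∈ segment ℝ s.1 s.2, ∃ x ∈ P,
      idist Y p x ≤ ENNReal.ofReal (ε + η) := by
    intro s hs p hp
    have hp' := hp
    rw [segment_eq_image_lineMap] at hp'
    obtain ⟨t0, ht0, rfl⟩ := hp'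
    set j : ℕ := ⌊t0 * m⌋₊ with hjdef
    have hj : j ≤ m := by
      rw [hjdef]
      calc ⌊t0 * m⌋₊ ≤ ⌊(m:ℝ)⌋₊ := Nat.floor_mono (by nlinarith [ht0.1, ht0.2])
      _ = m := Nat.floor_natCast m
    have hjle : (j:ℝ)/m ≤ t0 := by
      rw [div_le_iff₀ hm0, hjdef]
      exact Nat.floor_le (by nlinarith [ht0.1])
    have hjgt : t0 - (j:ℝ)/m ≤ 1/m := by
      have h2 : t0 * m < (j:ℝ) + 1 := by
        rw [hjdef]
        exact_mod_cast Nat.lt_floor_add_one (t0 * (m:ℝ))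
      rw [sub_le_iff_le_add, ← add_div, le_div_iff₀ hm0]
      linarith
    set z : Pt := ptOn s j with hzdef
    have hzseg : z ∈ segment ℝ s.1 s.2 := hpt_mem s j hj
    have hzH : z ∈ H := hAllH s hs hzseg
    have hdpz : dist (AffineMap.lineMap s.1 s.2 t0) z ≤ ε := by
      rw [hzdef]
      have : ptOn s j = AffineMap.lineMap s.1 s.2 ((j:ℝ)/m) := rfl
      rw [this, dist_lineMap_lineMap]
      have habs : |t0 - (j:ℝ)/m| ≤ 1/m := by
        rw [abs_of_nonneg (by linarith)]
        exact hjgt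
      have hds : dist s.1 s.2 ≤ dR :=
        hdistdR s.1 s.2 (hAllH s hs (left_mem_segment ℝ s.1 s.2))
          (hAllH s hs (right_mem_segment ℝ s.1 s.2))
      calc |t0 - (j:ℝ)/m| * dist s.1 s.2 ≤ (1/m) * dR := by
            exact mul_le_mul habs hds dist_nonneg (by positivity)
      _ = dR / m := by ring
      _ ≤ ε := hdRm
    have hseg1 : segment ℝ (AffineMap.lineMap s.1 s.2 t0) z ⊆ Y :=
      ((convex_segment s.1 s.2).segment_subset hp hzseg).trans (hsegY s hs)
    have hseg2 : segment ℝ z (hub z) ⊆ Y := htetherY _ (hL₃mem' s hs j hj)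
    refine ⟨hub z, hub_mem _ hzH, ?_⟩
    calc idist Y (AffineMap.lineMap s.1 s.2 t0) (hub z)
        ≤ idist Y (AffineMap.lineMap s.1 s.2 t0) z + idist Y z (hub z) :=
          idist_triangle Y _ z _
    _ ≤ ENNReal.ofReal ε + ENNReal.ofReal η := by
          refine add_le_add ?_ ?_
          · exact (idist_le_ofReal_dist hseg1).trans (ENNReal.ofReal_le_ofReal hdpz)
          · exact (idist_le_ofReal_dist hseg2).trans
              (ENNReal.ofReal_le_ofReal (hub_dist z hzH).le)
    _ = ENNReal.ofReal (ε + η) := (ENNReal.ofReal_add hε.le hη.le).symm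
  have hcover : ∀ p ∈ Y, ∃ x ∈ P, idist Y p x ≤ ENNReal.ofReal (ε + η) := by
    intro p hp
    have hp2 : p ∈ X ∪ ⋃ t ∈ L, segment ℝ t.1 t.2 := hp
    rcases hp2 with h | h
    · rw [hX] at h
      obtain ⟨s, hs, hps⟩ := Set.mem_iUnion₂.1 h
      exact hcoverSeg s (List.mem_append.2 (Or.inl (List.mem_append.2 (Or.inl hs)))) p hps
    · obtain ⟨t, ht, hpt⟩ := Set.mem_iUnion₂.1 h
      rcases List.mem_append.1 ht with ht' | ht'
      · rcases List.mem_append.1 ht' with h1 | h2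
        · exact hcoverSeg t (List.mem_append.2 (Or.inl (List.mem_append.2 (Or.inr h1)))) p hpt
        · exact hcoverSeg t (List.mem_append.2 (Or.inr h2)) p hpt
      · obtain ⟨s, hs, j, hj, rfl⟩ := hL₃mem t ht'
        set z : Pt := ptOn s j with hzdef
        have hzH : z ∈ H := hAllH s hs (hpt_mem s j hj)
        refine ⟨hub z, hub_mem _ hzH, ?_⟩
        have hsub : segment ℝ p (hub z) ⊆ Y := by
          refine Set.Subset.trans ?_ (htetherY _ ht')
          exact (convex_segment z (hub z)).segment_subset hpt (right_mem_segment ℝ z (hub z))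
        refine (idist_le_ofReal_dist hsub).trans (ENNReal.ofReal_le_ofReal ?_)
        have h1 : dist p (hub z) ≤ dist z (hub z) := dist_right_of_segment hpt
        have h2 : dist z (hub z) < η := hub_dist z hzH
        linarith [hε.le]
  -- hub-to-hub chains
  have hsegH : ∀ x y : Pt, x ∈ P → y ∈ P → ∀ t : ℝ, 0 ≤ t → t ≤ 1 →
      AffineMap.lineMap x y t ∈ H := by
    intro x y hx hy t h0 h1
    exact (convex_convexHull ℝ X).segment_subset (hPsub hx) (hPsub hy)
      (mem_segment_lineMap h0 h1)
  have hchain : ∀ x ∈ P, ∀ y ∈ P, idist Y x y ≤ ENNReal.ofReal (dist x y + 2*η*m) := by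
    intro x hx y hy
    set A : ℕ → Pt := fun i => AffineMap.lineMap x y ((i:ℝ)/m) with hAdef
    set g : ℕ → Pt := fun i => if i = 0 then x else if m ≤ i then y else hub (A i) with hgdef
    have hg0 : g 0 = x := by simp [hgdef]
    have hgm : g m = y := by simp [hgdef, Nat.one_le_iff_ne_zero.1 hm1]
    have hAH : ∀ i, i ≤ m → A i ∈ H := by
      intro i hi
      refine hsegH x y hx hy _ (by positivity) ?_
      rw [div_le_one hm0]
      exact_mod_cast hi
    have hgP : ∀ i, g i ∈ P := by
      intro i
      by_cases h0 : i = 0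
      · simpa [hgdef, h0] using hx
      · by_cases hmi : m ≤ i
        · simpa [hgdef, h0, hmi] using hy
        · simpa [hgdef, h0, hmi] using hub_mem _ (hAH i (le_of_not_ge hmi))
    have hgnear : ∀ i, i ≤ m → dist (g i) (A i) ≤ η := by
      intro i hi
      by_cases h0 : i = 0
      · have hA0 : A i = x := by
          simp only [hAdef, h0, Nat.cast_zero, zero_div, AffineMap.lineMap_apply_zero]
        have hg0' : g i = x := by rw [h0, hg0]
        rw [hA0, hg0', dist_self]
        exact hη.le
      · by_cases hmi : m ≤ i
        · have him : i = m := le_antisymm hi hmi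
          have hAm : A i = y := by
            simp only [hAdef, him]
            rw [div_self (ne_of_gt hm0), AffineMap.lineMap_apply_one]
          have hgm' : g i = y := by rw [him, hgm]
          rw [hAm, hgm', dist_self]
          exact hη.le
        · have hgi : g i = hub (A i) := by
            simp [hgdef, h0, hmi]
          rw [hgi, dist_comm]
          exact (hub_dist _ (hAH i hi)).le
    have hdA : ∀ i : ℕ, dist (A i) (A (i+1)) = dist x y / m := by
      intro i
      simp only [hAdef]
      rw [dist_lineMap_lineMap]
      have hc : ((i+1 : ℕ) : ℝ) = (i : ℝ) + 1 := by push_cast; ring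
      rw [hc, Real.dist_eq]
      have h2 : (i:ℝ)/m - ((i:ℝ)+1)/m = -(1/m) := by field_simp; ring
      rw [h2, abs_neg, abs_of_nonneg (by positivity : (0:ℝ) ≤ 1/m)]
      ring
    have hxydR : dist x y ≤ dR := hdistdR x y (hPsub hx) (hPsub hy)
    have hstep : ∀ i, i < m → idist Y (g i) (g (i+1)) ≤ ENNReal.ofReal (dist x y / m + 2*η) := by
      intro i hi
      have hd1 : dist (g i) (A i) ≤ η := hgnear i hi.le
      have hd2 : dist (g (i+1)) (A (i+1)) ≤ η := hgnear (i+1) hi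
      have hdist : dist (g i) (g (i+1)) ≤ dist x y / m + 2*η := by
        have h4 := dist_triangle4 (g i) (A i) (A (i+1)) (g (i+1))
        have h5 : dist (A (i+1)) (g (i+1)) = dist (g (i+1)) (A (i+1)) := dist_comm _ _
        rw [hdA i] at h4
        rw [h5] at h4
        linarith
      have hτ' : dist (g i) (g (i+1)) ≤ τ := by
        have h6 : dist x y / m ≤ dR / m := by gcongr
        rw [hτdef]
        linarith
      exact (idist_le_ofReal_dist (hhubedgeY _ _ (hgP i) (hgP (i+1)) hτ')).trans
        (ENNReal.ofReal_le_ofReal hdist)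
    have hsum : idist Y x y ≤ ∑ i ∈ Finset.range m, idist Y (g i) (g (i+1)) := by
      conv_lhs => rw [← hg0, ← hgm]
      exact idist_le_sum_chain (hPY (hgP 0)) m
    refine hsum.trans ?_
    calc ∑ i ∈ Finset.range m, idist Y (g i) (g (i+1))
        ≤ ∑ _i ∈ Finset.range m, ENNReal.ofReal (dist x y / m + 2*η) :=
          Finset.sum_le_sum fun i hi => hstep i (Finset.mem_range.1 hi)
    _ = (m : ℝ≥0∞) * ENNReal.ofReal (dist x y / m + 2*η) := by
          rw [Finset.sum_const, Finset.card_range, nsmul_eq_mul]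
    _ = ENNReal.ofReal ((m:ℝ) * (dist x y / m + 2*η)) := by
          rw [ENNReal.ofReal_mul (by positivity : (0:ℝ) ≤ (m:ℝ))]
          rw [ENNReal.ofReal_natCast]
    _ ≤ ENNReal.ofReal (dist x y + 2*η*m) := by
          refine ENNReal.ofReal_le_ofReal ?_
          have hmul : (m:ℝ) * (dist x y / m) = dist x y := by
            field_simp
          have : (m:ℝ) * (dist x y / m + 2*η) = dist x y + 2*η*m := by
            rw [mul_add, hmul]; ring
          rw [this]
  -- final assembly
  refine ⟨L, hvL, ?_⟩
  have hbound : ∀ p ∈ Y, ∀ q ∈ Y, idist Y p q ≤ ENNReal.ofReal (dR + δ) := by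
    intro p hp q hq
    obtain ⟨x, hxP, hpx⟩ := hcover p hp
    obtain ⟨y, hyP, hqy⟩ := hcover q hq
    have h3 : idist Y y q ≤ ENNReal.ofReal (ε + η) := by
      rw [idist_symm Y y q]; exact hqy
    have hxydR : dist x y ≤ dR := hdistdR x y (hPsub hxP) (hPsub hyP)
    have hkey : 2*η*((m:ℝ)+1) = δ/8 := by
      rw [hηdef]
      field_simp
      ring
    calc idist Y p q ≤ idist Y p x + idist Y x q := idist_triangle Y p x q
    _ ≤ idist Y p x + (idist Y x y + idist Y y q) :=
        add_le_add_right (idist_triangle Y x y q) _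
    _ ≤ ENNReal.ofReal (ε + η) + (ENNReal.ofReal (dist x y + 2*η*m) + ENNReal.ofReal (ε + η)) :=
        add_le_add hpx (add_le_add (hchain x hxP y hyP) h3)
    _ = ENNReal.ofReal ((ε + η) + ((dist x y + 2*η*m) + (ε + η))) := by
        have hd0 : (0:ℝ) ≤ dist x y + 2*η*m := add_nonneg dist_nonneg (by positivity)
        have he0 : (0:ℝ) ≤ ε + η := by positivity
        rw [← ENNReal.ofReal_add hd0 he0, ← ENNReal.ofReal_add he0 (add_nonneg hd0 he0)]
    _ ≤ ENNReal.ofReal (dR + δ) := by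
        refine ENNReal.ofReal_le_ofReal ?_
        have hkey2 : 2*η*(m:ℝ) + 2*η = δ/8 := by
          rw [hηdef]
          field_simp
          ring
        have hεe : ε = δ/8 := hεdef
        linarith [hxydR, hδ.le]
  have hidiam : idiam Y ≤ ENNReal.ofReal (dR + δ) := idiam_le hbound
  have hEd : ENNReal.ofReal dR = EMetric.diam H := by
    have h1 : dR = (EMetric.diam H).toReal := rfl
    rw [h1]
    exact ENNReal.ofReal_toReal ((Metric.isBounded_iff_ediam_ne_top).1 hHb)
  refine hidiam.trans ?_
  rw [ENNReal.ofReal_add hdR0 hδ.le, hEd]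

/-- A connected plane Euclidean network admits a shortcut set iff the
Euclidean diameter of the convex hull of the locus is strictly smaller than the
intrinsic diameter of the locus. -/
theorem stmt2 (N : PlaneNetwork) (hconn : N.Connected) :
    HasShortcutSet N.locus ↔
      EMetric.diam (convexHull ℝ N.locus) < idiam N.locus := by
  constructor
  · rintro ⟨L, hval, hlt⟩
    rw [EMetric.diam, convexHull_ediam]
    refine lt_of_le_of_lt ?_ hlt
    refine EMetric.diam_le fun p hp q hq => ?_
    exact (edist_le_idist (X := insertSegs N.locus L)).trans
      (idist_le_idiam (subset_insertSegs _ _ hp) (subset_insertSegs _ _ hq))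
  · intro hlt
    have hpc : IsPathConnected N.locus := hconn
    obtain ⟨x0, hx0, -⟩ := hpc
    have hne : N.locus.Nonempty := ⟨x0, hx0⟩
    have hX : N.locus = ⋃ s ∈ N.Edg.toList, segment ℝ s.1 s.2 := by
      ext x
      simp only [PlaneNetwork.locus, Set.mem_iUnion, Finset.mem_toList]
    have hXb : Bornology.IsBounded N.locus := by
      have hcomp : IsCompact N.locus := by
        rw [hX]
        refine (List.finite_toSet _).isCompact_biUnion fun s _ => ?_
        rw [segment_eq_image_lineMap]
        exact isCompact_Icc.image AffineMap.lineMap_continuous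
      exact hcomp.isBounded
    have hdne : EMetric.diam (convexHull ℝ N.locus) ≠ ⊤ :=
      (Metric.isBounded_iff_ediam_ne_top).1 (isBounded_convexHull.2 hXb)
    obtain ⟨δ, hδ, hsum⟩ : ∃ δ : ℝ, 0 < δ ∧
        EMetric.diam (convexHull ℝ N.locus) + ENNReal.ofReal δ < idiam N.locus := by
      rcases eq_or_ne (idiam N.locus) ⊤ with hD | hD
      · refine ⟨1, one_pos, ?_⟩
        rw [hD]
        exact lt_top_iff_ne_top.2 (ENNReal.add_ne_top.2 ⟨hdne, ENNReal.ofReal_ne_top⟩)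
      · obtain ⟨c, hc1, hc2⟩ := exists_between hlt
        have hcne : c ≠ ⊤ := ne_top_of_lt hc2
        have hsubne : c - EMetric.diam (convexHull ℝ N.locus) ≠ ⊤ := by
          exact ENNReal.sub_ne_top hcne
        refine ⟨(c - EMetric.diam (convexHull ℝ N.locus)).toReal, ?_, ?_⟩
        · refine ENNReal.toReal_pos ?_ hsubne
          exact ne_of_gt (tsub_pos_iff_lt.2 hc1)
        · rw [ENNReal.ofReal_toReal hsubne, add_tsub_cancel_of_le hc1.le]
          exact hc2
    obtain ⟨L, hv, hle⟩ := main_construction N.Edg.toList N.locus hX hne δ hδ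
    exact ⟨L, hv, lt_of_le_of_lt hle hsum⟩
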